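/- Let M and N be smooth finite-dimensional manifolds (without boundary, modeled on finite-dimensional real normed spaces with models with corners I and I′), and let q : M → N be a smooth map which is a submersion, i.e. mfderiv I I′ q x : T_xM → T_{q(x)}N is surjective for every x ∈ M, and whose fibers q⁻¹{y} are connected subsets of M for every y ∈ N. Let f : M → ℝ be a smooth function which is infinitesimally q-invariant in the sense that (mfderiv I 𝓘(ℝ,ℝ) f x)(v) = 0 for every x ∈ M and every v ∈ ker(mfderiv I I′ q x). Then f is constant along the fibers of q: for all x, y ∈ M, q(x) = q(y) implies f(x) = f(y). -/

import Mathlib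

open scoped Manifold
open Set Function Filter

/-- let `q : M → N` be a smooth submersion between smooth
finite-dimensional boundaryless manifolds whose fibers `q⁻¹{y}` are connected, and let
`f : M → ℝ` be a smooth function with `(mfderiv f x)(v) = 0` for every
`v ∈ ker(mfderiv q x)`.  Then `f` is constant along the fibers of `q`. -/
theorem statement15 {EM : Type*} [NormedAddCommGroup EM] [NormedSpace ℝ EM]
    [FiniteDimensional ℝ EM]
    {HM : Type*} [TopologicalSpace HM] {I : ModelWithCorners ℝ EM HM} [I.Boundaryless]
    {M : Type*} [TopologicalSpace M] [ChartedSpace HM M] [IsManifold I (⊤ : ℕ∞) M]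
    {EN : Type*} [NormedAddCommGroup EN] [NormedSpace ℝ EN] [FiniteDimensional ℝ EN]
    {HN : Type*} [TopologicalSpace HN] {I' : ModelWithCorners ℝ EN HN} [I'.Boundaryless]
    {N : Type*} [TopologicalSpace N] [ChartedSpace HN N] [IsManifold I' (⊤ : ℕ∞) N]
    (q : M → N) (hq : ContMDiff I I' (⊤ : ℕ∞) q)
    (hsub : ∀ x : M, Function.Surjective (mfderiv I I' q x))
    (hfib : ∀ y : N, IsPreconnected (q ⁻¹' {y}))
    (f : M → ℝ) (hf : ContMDiff I 𝓘(ℝ, ℝ) (⊤ : ℕ∞) f)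
    (hinv : ∀ (x : M) (v : TangentSpace I x),
      mfderiv I I' q x v = 0 → mfderiv I 𝓘(ℝ, ℝ) f x v = 0) :
    ∀ x y : M, q x = q y → f x = f y := by
  classical
  -- Key local statement: near any point, `f` is constant on the fiber through that point.
  have key : ∀ a : M, ∀ᶠ z in nhds a, q z = q a → f z = f a := by
    intro a
    have hqa : MDifferentiableAt I I' q a := (hq a).mdifferentiableAt (by simp)
    obtain ⟨hcont, hQs⟩ := contMDiffAt_iff.1 (hq a)
    rw [I.range_eq_univ, contDiffWithinAt_univ] at hQs
    set Q : EM → EN := ↑(extChartAt I' (q a)) ∘ q ∘ ↑(extChartAt I a).symm with hQdef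
    set x₀ : EM := extChartAt I a a with hx₀def
    have hone : (1 : WithTop ℕ∞) ≤ ((⊤ : ℕ∞) : WithTop ℕ∞) := by
      exact_mod_cast (le_top : (1 : ℕ∞) ≤ ⊤)
    have hQd : DifferentiableAt ℝ Q x₀ := hQs.differentiableAt (by simp)
    -- the chart representative of the derivative
    have hDeq : mfderiv I I' q a = fderiv ℝ Q x₀ := by
      rw [hqa.mfderiv, I.range_eq_univ, fderivWithin_univ]
      rfl
    set D : EM →L[ℝ] EN := fderiv ℝ Q x₀ with hDdef
    have hDsurj : Function.Surjective D := by rw [← hDeq]; exact hsub a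
    set K : Submodule ℝ EM := LinearMap.ker (D : EM →ₗ[ℝ] EN) with hKdef
    obtain ⟨K', hK'⟩ := Submodule.exists_isCompl K
    set π : EM →L[ℝ] ↥K :=
      LinearMap.toContinuousLinearMap (K.linearProjOfIsCompl K' hK') with hπdef
    have hπmem : ∀ (v : EM) (hv : v ∈ K), π v = ⟨v, hv⟩ := by
      intro v hv
      have := Submodule.linearProjOfIsCompl_apply_left hK' (⟨v, hv⟩ : K)
      exact this
    set Φ : EM → EN × ↥K := fun e => (Q e, π e) with hΦdef
    set DΦ : EM →L[ℝ] EN × ↥K := D.prod π with hDΦdef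
    have hker : ∀ e : EM, DΦ e = 0 → e = 0 := by
      intro e he
      have h1 : D e = 0 := congrArg Prod.fst he
      have h2 : π e = 0 := congrArg Prod.snd he
      have heK : e ∈ K := by simpa [hKdef, LinearMap.mem_ker] using h1
      have h3 := hπmem e heK
      rw [h2] at h3
      simpa using congrArg Subtype.val h3.symm
    have hinjΦ : Function.Injective DΦ := by
      intro u v huv
      have : DΦ (u - v) = 0 := by rw [map_sub, huv, sub_self]
      have := hker _ this
      exact sub_eq_zero.mp this
    have hsurjΦ : Function.Surjective DΦ := by
      rintro ⟨n, k⟩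
      obtain ⟨e, he⟩ := hDsurj n
      have hmem : (k : EM) - ((π e : ↥K) : EM) ∈ K := sub_mem k.2 (π e).2
      refine ⟨e + ((k : EM) - ((π e : ↥K) : EM)), ?_⟩
      have hD0 : D ((k : EM) - ((π e : ↥K) : EM)) = 0 := hmem
      have hπ0 : π ((k : EM) - ((π e : ↥K) : EM)) = ⟨_, hmem⟩ := hπmem _ hmem
      have : DΦ (e + ((k : EM) - ((π e : ↥K) : EM)))
          = (D e + D ((k : EM) - ((π e : ↥K) : EM)),
             π e + π ((k : EM) - ((π e : ↥K) : EM))) := by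
        simp [hDΦdef]
      rw [this, hD0, hπ0, he]
      refine Prod.ext (by simp) ?_
      apply Subtype.ext
      push_cast
      abel
    set Φe : EM ≃L[ℝ] EN × ↥K :=
      (LinearEquiv.ofBijective (DΦ : EM →ₗ[ℝ] EN × ↥K) ⟨hinjΦ, hsurjΦ⟩).toContinuousLinearEquiv
      with hΦedef
    have hΦecoe : (Φe : EM →L[ℝ] EN × ↥K) = DΦ := by
      ext v <;> rfl
    have hΦ' : HasFDerivAt Φ (Φe : EM →L[ℝ] EN × ↥K) x₀ := by
      rw [hΦecoe]
      exact hQd.hasFDerivAt.prodMk π.hasFDerivAt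
    have hΦs : ContDiffAt ℝ ((⊤ : ℕ∞) : WithTop ℕ∞) Φ x₀ :=
      hQs.prodMk π.contDiff.contDiffAt
    set PH := hΦs.toOpenPartialHomeomorph Φ hΦ' (by simp) with hPHdef
    have hPHcoe : ⇑PH = Φ := ContDiffAt.toOpenPartialHomeomorph_coe hΦs hΦ' (by simp)
    have hsrc : x₀ ∈ PH.source := ContDiffAt.mem_toOpenPartialHomeomorph_source hΦs hΦ' (by simp)
    have htgt : Φ x₀ ∈ PH.target := ContDiffAt.image_mem_toOpenPartialHomeomorph_target hΦs hΦ' (by simp)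
    set ψ : EN × ↥K → EM := ⇑PH.symm with hψdef
    have hψs : ContDiffAt ℝ ((⊤ : ℕ∞) : WithTop ℕ∞) ψ (Φ x₀) :=
      hΦs.to_localInverse hΦ' (by simp)
    obtain ⟨V, hVo, hVmem, hψ1⟩ :=
      ContDiffWithinAt.contDiffOn' (m := 1) hone (by simp) hψs
    rw [insert_eq_of_mem (mem_univ _), univ_inter] at hψ1
    -- the good open set of slice parameters
    set k₀ : ↥K := π x₀ with hk₀def
    set u : ↥K → EN × ↥K := fun k => (Q x₀, k) with hudef
    have hucont : Continuous u := continuous_const.prodMk continuous_id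
    set O : Set EM := (extChartAt I a).target ∩
        (↑(extChartAt I a).symm ⁻¹' (q ⁻¹' (extChartAt I' (q a)).source)) with hOdef
    have hOopen : IsOpen O := by
      apply ContinuousOn.isOpen_inter_preimage
        (hq.continuous.comp_continuousOn (continuousOn_extChartAt_symm a))
        (isOpen_extChartAt_target a)
        ((isOpen_extChartAt_source (q a)))
    set S : Set ↥K := (u ⁻¹' (PH.target ∩ V)) ∩ ((fun k => ψ (u k)) ⁻¹' O) with hSdef
    have hSopen : IsOpen S := by
      have h1 : IsOpen (u ⁻¹' (PH.target ∩ V)) :=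
        (PH.open_target.inter hVo).preimage hucont
      have h2 : ContinuousOn (fun k => ψ (u k)) (u ⁻¹' (PH.target ∩ V)) := by
        apply PH.continuousOn_symm.comp hucont.continuousOn
        intro k hk
        exact hk.1
      exact h2.isOpen_inter_preimage h1 hOopen
    have hk₀S : k₀ ∈ S := by
      have hu0 : u k₀ = Φ x₀ := rfl
      have hψ0 : ψ (u k₀) = x₀ := by
        rw [hu0, hψdef, ← hPHcoe]
        exact PH.left_inv hsrc
      constructor
      · rw [mem_preimage, hu0]
        exact ⟨htgt, hVmem⟩
      · rw [mem_preimage, hψ0]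
        refine ⟨mem_extChartAt_target a, ?_⟩
        rw [mem_preimage, hx₀def, extChartAt_to_inv]
        exact mem_preimage.2 (mem_extChartAt_source (q a))
    obtain ⟨r, hr, hball⟩ := Metric.isOpen_iff.1 hSopen k₀ hk₀S
    set c : ↥K → M := fun k => (extChartAt I a).symm (ψ (u k)) with hcdef
    have hca : c k₀ = a := by
      have hu0 : u k₀ = Φ x₀ := rfl
      have hψ0 : ψ (u k₀) = x₀ := by
        rw [hu0, hψdef, ← hPHcoe]
        exact PH.left_inv hsrc
      show (extChartAt I a).symm (ψ (u k₀)) = a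
      rw [hψ0, hx₀def]
      exact extChartAt_to_inv a
    -- on the ball, `c` lands in the fiber of `a`
    have hfiber : ∀ k ∈ Metric.ball k₀ r, q (c k) = q a := by
      intro k hk
      have hkS := hball hk
      have hmemT : u k ∈ PH.target := hkS.1.1
      have hrinv : Φ (ψ (u k)) = u k := by
        rw [← hPHcoe, hψdef]
        exact PH.right_inv hmemT
      have h1 : Q (ψ (u k)) = Q x₀ := congrArg Prod.fst hrinv
      have hO := hkS.2
      have hmem1 : q (c k) ∈ (extChartAt I' (q a)).source := hO.2
      have hmem2 : q a ∈ (extChartAt I' (q a)).source := mem_extChartAt_source (q a)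
      have h2 : extChartAt I' (q a) (q (c k)) = extChartAt I' (q a) (q a) := by
        have hx0 : Q x₀ = extChartAt I' (q a) (q a) := by
          rw [hQdef]
          simp only [comp_apply, hx₀def]
          rw [extChartAt_to_inv]
        calc extChartAt I' (q a) (q (c k)) = Q (ψ (u k)) := rfl
          _ = Q x₀ := h1
          _ = extChartAt I' (q a) (q a) := hx0
      exact (extChartAt I' (q a)).injOn hmem1 hmem2 h2
    -- differentiability of `c` on the ball
    have hcd : ∀ k ∈ Metric.ball k₀ r, MDifferentiableAt 𝓘(ℝ, ↥K) I c k := by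
      intro k hk
      have hkS := hball hk
      have hψd : DifferentiableAt ℝ ψ (u k) :=
        (hψ1.differentiableOn one_ne_zero).differentiableAt (hVo.mem_nhds hkS.1.2)
      have hud : DifferentiableAt ℝ (fun k' : ↥K => ψ (u k')) k := by
        exact hψd.comp k ((differentiableAt_const _).prodMk differentiableAt_id)
      have hin : MDifferentiableAt 𝓘(ℝ, ↥K) 𝓘(ℝ, EM) (fun k' : ↥K => ψ (u k')) k :=
        mdifferentiableAt_iff_differentiableAt.2 hud
      have hsymm : MDifferentiableAt 𝓘(ℝ, EM) I (↑(extChartAt I a).symm) (ψ (u k)) := by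
        have := (contMDiffOn_extChartAt_symm (I := I) (n := ((⊤ : ℕ∞) : WithTop ℕ∞)) a).mdifferentiableOn (by simp)
        exact this.mdifferentiableAt ((isOpen_extChartAt_target a).mem_nhds hkS.2.1)
      exact hsymm.comp k hin
    -- `f ∘ c` has vanishing derivative on the ball
    have hfc0 : ∀ k ∈ Metric.ball k₀ r, fderiv ℝ (f ∘ c) k = 0 := by
      intro k hk
      have hqc0 : mfderiv 𝓘(ℝ, ↥K) I' (q ∘ c) k = 0 := by
        have hev : (q ∘ c) =ᶠ[nhds k] fun _ => q a := by
          filter_upwards [Metric.isOpen_ball.mem_nhds hk] with k' hk'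
          exact hfiber k' hk'
        rw [hev.mfderiv_eq]
        exact mfderiv_const
      have hcomp : mfderiv 𝓘(ℝ, ↥K) I' (q ∘ c) k =
          (mfderiv I I' q (c k)).comp (mfderiv 𝓘(ℝ, ↥K) I c k) :=
        mfderiv_comp k ((hq (c k)).mdifferentiableAt (by simp)) (hcd k hk)
      have hker0 : ∀ v : ↥K, mfderiv I I' q (c k) (mfderiv 𝓘(ℝ, ↥K) I c k v) = 0 := by
        intro v
        have := congrArg (fun L => L v) (hcomp.symm.trans hqc0)
        exact this
      have hfcomp : mfderiv 𝓘(ℝ, ↥K) 𝓘(ℝ, ℝ) (f ∘ c) k =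
          (mfderiv I 𝓘(ℝ, ℝ) f (c k)).comp (mfderiv 𝓘(ℝ, ↥K) I c k) :=
        mfderiv_comp k ((hf (c k)).mdifferentiableAt (by simp)) (hcd k hk)
      have hzero : mfderiv 𝓘(ℝ, ↥K) 𝓘(ℝ, ℝ) (f ∘ c) k = 0 := by
        rw [hfcomp]
        ext v
        simpa using hinv (c k) (mfderiv 𝓘(ℝ, ↥K) I c k v) (hker0 v)
      rw [← mfderiv_eq_fderiv]
      exact hzero
    have hfcd : ∀ k ∈ Metric.ball k₀ r, DifferentiableAt ℝ (f ∘ c) k := by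
      intro k hk
      have : MDifferentiableAt 𝓘(ℝ, ↥K) 𝓘(ℝ, ℝ) (f ∘ c) k :=
        ((hf (c k)).mdifferentiableAt (by simp)).comp k (hcd k hk)
      exact mdifferentiableAt_iff_differentiableAt.1 this
    -- `f ∘ c` is constant on the ball
    have hconst : ∀ k ∈ Metric.ball k₀ r, f (c k) = f a := by
      intro k hk
      have := (convex_ball k₀ r).is_const_of_fderivWithin_eq_zero
        (f := f ∘ c) (𝕜 := ℝ)
        (fun k' hk' => (hfcd k' hk').differentiableWithinAt)
        (fun k' hk' => by
          rw [fderivWithin_of_isOpen Metric.isOpen_ball hk']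
          exact hfc0 k' hk')
        hk (Metric.mem_ball_self hr)
      calc f (c k) = f (c k₀) := this
        _ = f a := by rw [hca]
    -- now produce the neighborhood
    have hU : {z : M | z ∈ (extChartAt I a).source ∧ extChartAt I a z ∈ PH.source ∧
        π (extChartAt I a z) ∈ Metric.ball k₀ r ∧
        q z ∈ (extChartAt I' (q a)).source} ∈ nhds a := by
      have h1 : (extChartAt I a).source ∈ nhds a := extChartAt_source_mem_nhds a
      have h2 : {z : M | extChartAt I a z ∈ PH.source} ∈ nhds a :=
        (continuousAt_extChartAt a).preimage_mem_nhds (PH.open_source.mem_nhds hsrc)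
      have h3 : {z : M | π (extChartAt I a z) ∈ Metric.ball k₀ r} ∈ nhds a := by
        have : ContinuousAt (fun z => π (extChartAt I a z)) a :=
          π.continuous.continuousAt.comp (continuousAt_extChartAt a)
        exact this.preimage_mem_nhds
          (Metric.isOpen_ball.mem_nhds (by rw [hk₀def]; exact Metric.mem_ball_self hr))
      have h4 : {z : M | q z ∈ (extChartAt I' (q a)).source} ∈ nhds a :=
        (hq.continuous.continuousAt).preimage_mem_nhds
          ((isOpen_extChartAt_source (q a)).mem_nhds (mem_extChartAt_source (q a)))
      filter_upwards [h1, h2, h3, h4] with z hz1 hz2 hz3 hz4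
      exact ⟨hz1, hz2, hz3, hz4⟩
    filter_upwards [hU] with z hz hqz
    obtain ⟨hz1, hz2, hz3, hz4⟩ := hz
    set e : EM := extChartAt I a z with hedef
    have hQe : Q e = Q x₀ := by
      have hzi : (extChartAt I a).symm e = z := (extChartAt I a).left_inv hz1
      have h1 : Q e = extChartAt I' (q a) (q z) := by
        rw [hQdef]
        simp only [comp_apply]
        rw [hzi]
      have h2 : Q x₀ = extChartAt I' (q a) (q a) := by
        rw [hQdef]
        simp only [comp_apply, hx₀def]
        rw [extChartAt_to_inv]
      rw [h1, h2, hqz]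
    have hΦe2 : Φ e = u (π e) := by
      rw [hΦdef, hudef]
      exact Prod.ext hQe rfl
    have hlinv : ψ (Φ e) = e := by
      rw [hψdef, ← hPHcoe]
      exact PH.left_inv hz2
    have hcz : c (π e) = z := by
      show (extChartAt I a).symm (ψ (u (π e))) = z
      rw [← hΦe2, hlinv]
      exact (extChartAt I a).left_inv hz1
    have := hconst (π e) hz3
    rw [hcz] at this
    exact this
  -- Conclude using connectedness of the fibers.
  intro x y hxy
  haveI : PreconnectedSpace (q ⁻¹' {q y}) := Subtype.preconnectedSpace (hfib (q y))
  have hlc : IsLocallyConstant (fun z : q ⁻¹' {q y} => f z) := by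
    rw [IsLocallyConstant.iff_exists_open]
    rintro ⟨z, hz⟩
    obtain ⟨U, hUsub, hUo, hzU⟩ := mem_nhds_iff.1 (key z)
    refine ⟨Subtype.val ⁻¹' U, hUo.preimage continuous_subtype_val, hzU, ?_⟩
    rintro ⟨w, hw⟩ hwU
    exact hUsub hwU (hw.trans hz.symm)
  exact hlc.apply_eq_of_preconnectedSpace ⟨x, hxy⟩ ⟨y, rfl⟩
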